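/- Let n ≥ 1 be an integer and θ > 0 a real number. Then n/(2(θ+n)) ≤ (∑_{j=1}^n θ/(θ+j−1)) − θ·log(1 + n/θ) ≤ n/(θ+n). -/

import Mathlib

lemma log_le_half_aux (y : ℝ) (hy : 1 ≤ y) : Real.log y ≤ (y - y⁻¹) / 2 := by
  set f : ℝ → ℝ := fun x => (x - x⁻¹) / 2 - Real.log x with hf
  have hder : ∀ x : ℝ, 0 < x → HasDerivAt f ((1 - x⁻¹) ^ 2 / 2) x := by
    intro x hx
    have hx0 : x ≠ 0 := hx.ne'
    have h1 := ((hasDerivAt_id x).sub (hasDerivAt_inv hx0)).div_const 2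
    have h2 := Real.hasDerivAt_log hx0
    have h := h1.sub h2
    have e : (1 - x⁻¹) ^ 2 / 2 = (1 - -(x ^ 2)⁻¹) / 2 - x⁻¹ := by
      field_simp
      ring
    rw [e]
    exact h
  have hmono : MonotoneOn f (Set.Ici (1:ℝ)) := by
    apply monotoneOn_of_deriv_nonneg (convex_Ici 1)
    · intro x hx
      have hx0 : (0:ℝ) < x := lt_of_lt_of_le one_pos hx
      exact ((hder x hx0).continuousAt).continuousWithinAt
    · intro x hx
      rw [interior_Ici] at hx
      have hx0 : (0:ℝ) < x := lt_trans one_pos hx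
      exact ((hder x hx0).differentiableAt).differentiableWithinAt
    · intro x hx
      rw [interior_Ici] at hx
      have hx0 : (0:ℝ) < x := lt_trans one_pos hx
      rw [(hder x hx0).deriv]
      positivity
  have h1 : f 1 ≤ f y := hmono (Set.self_mem_Ici) hy hy
  have hf1 : f 1 = 0 := by simp [hf]
  have := hf1 ▸ h1
  simp only [hf] at this
  linarith

lemma step_bound (θ a : ℝ) (hθ : 0 < θ) (ha : 0 < a) :
    θ / (2 * (a * (a + 1))) ≤ θ / a - θ * (Real.log (a + 1) - Real.log a) ∧
    θ / a - θ * (Real.log (a + 1) - Real.log a) ≤ θ / (a * (a + 1)) := by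
  have hne : a ≠ 0 := ha.ne'
  have ha1 : (0:ℝ) < a + 1 := by linarith
  have hlogd : Real.log (a + 1) - Real.log a = Real.log ((a + 1) / a) :=
    (Real.log_div ha1.ne' hne).symm
  have hy : (1:ℝ) ≤ (a + 1) / a := by rw [le_div_iff₀ ha]; linarith
  have hy0 : (0:ℝ) < (a + 1) / a := by positivity
  constructor
  · have hu := log_le_half_aux _ hy
    have hinv : ((a + 1) / a)⁻¹ = a / (a + 1) := by field_simp
    rw [hinv] at hu
    have heq : ((a + 1) / a - a / (a + 1)) / 2 = (2 * a + 1) / (2 * (a * (a + 1))) := by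
      field_simp; ring
    rw [heq] at hu
    have hmul : θ * Real.log ((a + 1) / a) ≤ θ * ((2 * a + 1) / (2 * (a * (a + 1)))) :=
      mul_le_mul_of_nonneg_left hu hθ.le
    rw [hlogd]
    have hk : θ / a - θ * ((2 * a + 1) / (2 * (a * (a + 1)))) = θ / (2 * (a * (a + 1))) := by
      field_simp; ring
    linarith
  · have hl := Real.one_sub_inv_le_log_of_pos hy0
    have hinv : ((a + 1) / a)⁻¹ = a / (a + 1) := by field_simp
    rw [hinv] at hl
    have heq : (1:ℝ) - a / (a + 1) = 1 / (a + 1) := by field_simp; ring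
    rw [heq] at hl
    have hmul : θ * (1 / (a + 1)) ≤ θ * Real.log ((a + 1) / a) :=
      mul_le_mul_of_nonneg_left hl hθ.le
    rw [hlogd]
    have hk : θ / a - θ * (1 / (a + 1)) = θ / (a * (a + 1)) := by
      field_simp; ring
    linarith

theorem stmt_0 (n : ℕ) (hn : 1 ≤ n) (θ : ℝ) (hθ : 0 < θ) :
    (n : ℝ) / (2 * (θ + n)) ≤
      (∑ j ∈ Finset.Icc 1 n, θ / (θ + (j : ℝ) - 1)) - θ * Real.log (1 + n / θ) ∧
    (∑ j ∈ Finset.Icc 1 n, θ / (θ + (j : ℝ) - 1)) - θ * Real.log (1 + n / θ) ≤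
      (n : ℝ) / (θ + n) := by
  have hlog : ∀ m : ℕ, Real.log (1 + (m : ℝ) / θ) = Real.log (θ + m) - Real.log θ := by
    intro m
    have hm : (0:ℝ) < θ + m := by positivity
    rw [show (1:ℝ) + (m:ℝ) / θ = (θ + m) / θ by field_simp, Real.log_div hm.ne' hθ.ne']
  induction n, hn using Nat.le_induction with
  | base =>
    have hb := step_bound θ θ hθ hθ
    have hl1 := hlog 1
    push_cast at hl1
    simp only [Nat.cast_one, Finset.Icc_self, Finset.sum_singleton]
    rw [hl1]
    have h1 : θ + (1:ℝ) - 1 = θ := by ring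
    rw [h1]
    have e1 : θ / (2 * (θ * (θ + 1))) = 1 / (2 * (θ + 1)) := by
      rw [div_eq_div_iff (by positivity) (by positivity)]; ring
    have e2 : θ / (θ * (θ + 1)) = 1 / (θ + 1) := by
      rw [div_eq_div_iff (by positivity) (by positivity)]; ring
    constructor
    · calc (1:ℝ) / (2 * (θ + 1)) = θ / (2 * (θ * (θ + 1))) := e1.symm
        _ ≤ _ := hb.1
    · calc θ / θ - θ * (Real.log (θ + 1) - Real.log θ) ≤ θ / (θ * (θ + 1)) := hb.2
        _ = 1 / (θ + 1) := e2
  | succ n hn ih =>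
    have ha : (0:ℝ) < θ + n := by positivity
    have ha1 : (0:ℝ) < θ + n + 1 := by positivity
    have hs := step_bound θ (θ + n) hθ ha
    have hsum : ∑ j ∈ Finset.Icc 1 (n + 1), θ / (θ + (j : ℝ) - 1)
        = (∑ j ∈ Finset.Icc 1 n, θ / (θ + (j : ℝ) - 1)) + θ / (θ + n) := by
      rw [Finset.sum_Icc_succ_top (by omega)]
      have : θ + ((n:ℝ) + 1) - 1 = θ + n := by ring
      push_cast
      rw [this]
    rw [hsum, hlog (n+1), hlog n] at *
    push_cast at *
    have e1 : (n:ℝ) / (2 * (θ + n)) + θ / (2 * ((θ + n) * (θ + n + 1)))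
        = ((n:ℝ) + 1) / (2 * (θ + (n + 1))) := by
      rw [div_add_div _ _ (by positivity) (by positivity),
        div_eq_div_iff (by positivity) (by positivity)]
      ring
    have e2 : (n:ℝ) / (θ + n) + θ / ((θ + n) * (θ + n + 1))
        = ((n:ℝ) + 1) / (θ + (n + 1)) := by
      rw [div_add_div _ _ (by positivity) (by positivity),
        div_eq_div_iff (by positivity) (by positivity)]
      ring
    have hlog2 : Real.log (θ + ((n:ℝ) + 1)) - Real.log θ
        = (Real.log (θ + n) - Real.log θ) + (Real.log (θ + n + 1) - Real.log (θ + n)) := by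
      rw [show θ + ((n:ℝ) + 1) = θ + n + 1 by ring]
      ring
    constructor
    · rw [← e1]
      have := hs.1
      nlinarith [ih.1, hs.1, hlog2]
    · rw [← e2]
      nlinarith [ih.2, hs.2, hlog2]
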